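/- For a two-user MAC with fading power gains $\alpha_1 \ge \alpha_2 > 0$ and nondecreasing quantile functions $b_1, b_2$ of the users' rate distributions, the minimum average sum-power under unit delay satisfies $P^{min}_{avg}(1) = \int_0^{1-\alpha_2/\alpha_1} \frac{2^{2 b_2(x)}-1}{\alpha_2}\,dx + \int_0^{\alpha_2/\alpha_1} \frac{2^{2(b_2(v+1-\alpha_2/\alpha_1) + b_1(\alpha_1 v/\alpha_2))}-1}{\alpha_2}\,dv$, i.e., this value is both a lower bound on the average sum-power of any outage-free allocation and is achieved by some outage-free allocation. -/

import Mathlib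

open MeasureTheory

open MeasureTheory Real Set

noncomputable section AuxMAC

variable (n G : ℝ → ℝ)

def psums (x : ℝ) : Set ℝ :=
  { v | ∃ k : ℕ, ∃ t : ℕ → ℝ,
      (∀ i ≤ k, t i ∈ Set.Icc 0 x) ∧ (∀ i < k, t i ≤ t (i + 1)) ∧
      t 0 = 0 ∧ t k = x ∧
      v = ∑ i ∈ Finset.range k, n (t i) * (G (t (i + 1)) - G (t i)) }

def LS (x : ℝ) : ℝ := sSup (psums n G x)

variable {n G}

lemma basic_mem {x : ℝ} (hx : 0 ≤ x) : n 0 * (G x - G 0) ∈ psums n G x := by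
  refine ⟨1, fun i => if i = 0 then 0 else x, ?_, ?_, ?_, ?_, ?_⟩
  · intro i _
    by_cases h : i = 0 <;> simp [h, hx]
  · intro i hi
    interval_cases i
    simpa using hx
  · simp
  · simp
  · simp

lemma sum_le_of_mem (hn : MonotoneOn n (Icc 0 1)) (hG : MonotoneOn G (Icc 0 1))
    {x v : ℝ} (hx : x ∈ Icc (0:ℝ) 1) (hv : v ∈ psums n G x) :
    v ≤ n x * (G x - G 0) := by
  obtain ⟨k, t, hmem, hmono, h0, hk, rfl⟩ := hv
  have hti : ∀ i ≤ k, t i ∈ Icc (0:ℝ) 1 := fun i hi =>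
    ⟨(hmem i hi).1, le_trans (hmem i hi).2 hx.2⟩
  calc ∑ i ∈ Finset.range k, n (t i) * (G (t (i + 1)) - G (t i))
      ≤ ∑ i ∈ Finset.range k, n x * (G (t (i + 1)) - G (t i)) := by
        refine Finset.sum_le_sum fun i hi => ?_
        rw [Finset.mem_range] at hi
        have h1 : t i ∈ Icc (0:ℝ) 1 := hti i hi.le
        have h2 : n (t i) ≤ n x := hn h1 hx (hmem i hi.le).2
        have h3 : G (t i) ≤ G (t (i + 1)) := hG h1 (hti (i+1) hi) (hmono i hi)
        exact mul_le_mul_of_nonneg_right h2 (by linarith)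
    _ = n x * (G x - G 0) := by
        rw [← Finset.mul_sum, Finset.sum_range_sub (fun i => G (t i)), hk, h0]

lemma psums_bddAbove (hn : MonotoneOn n (Icc 0 1)) (hG : MonotoneOn G (Icc 0 1))
    {x : ℝ} (hx : x ∈ Icc (0:ℝ) 1) : BddAbove (psums n G x) :=
  ⟨n x * (G x - G 0), fun _ hv => sum_le_of_mem hn hG hx hv⟩

lemma LS_le (hn : MonotoneOn n (Icc 0 1)) (hG : MonotoneOn G (Icc 0 1))
    {x : ℝ} (hx : x ∈ Icc (0:ℝ) 1) : LS n G x ≤ n x * (G x - G 0) :=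
  csSup_le ⟨_, basic_mem hx.1⟩ (fun _ hv => sum_le_of_mem hn hG hx hv)

lemma le_LS (hn : MonotoneOn n (Icc 0 1)) (hG : MonotoneOn G (Icc 0 1))
    {x : ℝ} (hx : x ∈ Icc (0:ℝ) 1) : n 0 * (G x - G 0) ≤ LS n G x :=
  le_csSup (psums_bddAbove hn hG hx) (basic_mem hx.1)

lemma mem_extend {x x' v : ℝ} (hx0 : 0 ≤ x) (hxx : x ≤ x') (hv : v ∈ psums n G x) :
    v + n x * (G x' - G x) ∈ psums n G x' := by
  obtain ⟨k, t, hmem, hmono, h0, hk, rfl⟩ := hv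
  refine ⟨k + 1, fun i => if i ≤ k then t i else x', ?_, ?_, ?_, ?_, ?_⟩
  · intro i _
    by_cases h : i ≤ k
    · simp only [h, if_pos]
      exact ⟨(hmem i h).1, le_trans (hmem i h).2 hxx⟩
    · simp only [h, if_neg, if_false]
      exact ⟨le_trans hx0 hxx, le_refl _⟩
  · intro i hi
    rcases lt_or_eq_of_le (Nat.lt_succ_iff.mp hi) with h | h
    · have h1 : i ≤ k := h.le
      have h2 : i + 1 ≤ k := h
      simp only [h1, h2, if_pos]
      exact hmono i h
    · subst h
      show (if i ≤ i then t i else x') ≤ (if i + 1 ≤ i then t (i+1) else x')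
      rw [if_pos le_rfl, if_neg (by omega), hk]
      exact hxx
  · simp [Nat.zero_le, h0]
  · simp [not_le.mpr (Nat.lt_succ_self k)]
  · rw [Finset.sum_range_succ]
    congr 1
    · refine Finset.sum_congr rfl fun i hi => ?_
      rw [Finset.mem_range] at hi
      have h1 : i ≤ k := hi.le
      have h2 : i + 1 ≤ k := hi
      simp [h1, h2]
    · simp [not_le.mpr (Nat.lt_succ_self k), hk]

lemma key_clip (hn : MonotoneOn n (Icc 0 1)) (hG : MonotoneOn G (Icc 0 1))
    {x x' v : ℝ} (hx0 : 0 ≤ x) (hxx : x ≤ x') (hx1 : x' ≤ 1)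
    (hv : v ∈ psums n G x') :
    ∃ v' ∈ psums n G x, v ≤ v' + n x' * (G x' - G x) := by
  obtain ⟨k, t, hmem, hmono, h0, hk, rfl⟩ := hv
  have hx'mem : x' ∈ Icc (0:ℝ) 1 := ⟨le_trans hx0 hxx, hx1⟩
  have hti : ∀ i ≤ k, t i ∈ Icc (0:ℝ) 1 := fun i hi =>
    ⟨(hmem i hi).1, le_trans (hmem i hi).2 hx1⟩
  have htix : ∀ i ≤ k, min (t i) x ∈ Icc (0:ℝ) 1 :=
    fun i hi => ⟨le_min (hmem i hi).1 hx0, le_trans (min_le_right _ _) (le_trans hxx hx1)⟩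
  refine ⟨∑ i ∈ Finset.range k, n (min (t i) x) * (G (min (t (i+1)) x) - G (min (t i) x)),
    ⟨k, fun i => min (t i) x, ?_, ?_, ?_, ?_, rfl⟩, ?_⟩
  · intro i hi
    exact ⟨le_min (hmem i hi).1 hx0, min_le_right _ _⟩
  · intro i hi
    exact min_le_min (hmono i hi) le_rfl
  · show min (t 0) x = 0
    rw [h0]; exact min_eq_left hx0
  · show min (t k) x = x
    rw [hk]; exact min_eq_right hxx
  · -- main inequality
    have key : ∀ i < k,
        n (t i) * (G (t (i + 1)) - G (t i)) ≤
          n (min (t i) x) * (G (min (t (i+1)) x) - G (min (t i) x))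
            + n x' * ((G (t (i+1)) - G (min (t (i+1)) x)) - (G (t i) - G (min (t i) x))) := by
      intro i hi
      have hni : n (t i) ≤ n x' := hn (hti i hi.le) hx'mem (hmem i hi.le).2
      by_cases hc : t i ≤ x
      · rw [min_eq_left hc]
        have hmin : G (min (t (i+1)) x) ≤ G (t (i+1)) :=
          hG (htix (i+1) hi) (hti (i+1) hi) (min_le_left _ _)
        nlinarith [hmin, hni]
      · push_neg at hc
        have h1 : min (t i) x = x := min_eq_right hc.le
        have h2 : min (t (i+1)) x = x := min_eq_right (le_trans hc.le (hmono i hi))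
        rw [h1, h2]
        have h3 : G (t i) ≤ G (t (i+1)) := hG (hti i hi.le) (hti (i+1) hi) (hmono i hi)
        nlinarith [h3, hni]
    calc ∑ i ∈ Finset.range k, n (t i) * (G (t (i + 1)) - G (t i))
        ≤ ∑ i ∈ Finset.range k,
            (n (min (t i) x) * (G (min (t (i+1)) x) - G (min (t i) x))
              + n x' * ((G (t (i+1)) - G (min (t (i+1)) x)) - (G (t i) - G (min (t i) x)))) := by
          refine Finset.sum_le_sum fun i hi => key i (Finset.mem_range.mp hi)
      _ = (∑ i ∈ Finset.range k, n (min (t i) x) * (G (min (t (i+1)) x) - G (min (t i) x)))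
            + n x' * (G x' - G x) := by
          rw [Finset.sum_add_distrib, ← Finset.mul_sum,
            Finset.sum_range_sub (fun i => G (t i) - G (min (t i) x))]
          simp only [hk, h0, min_eq_right hxx, min_eq_left hx0]
          ring

lemma LS_add_le (hn : MonotoneOn n (Icc 0 1)) (hG : MonotoneOn G (Icc 0 1))
    {x x' : ℝ} (hx0 : 0 ≤ x) (hxx : x ≤ x') (hx1 : x' ≤ 1) :
    LS n G x + n x * (G x' - G x) ≤ LS n G x' := by
  have hx'mem : x' ∈ Icc (0:ℝ) 1 := ⟨le_trans hx0 hxx, hx1⟩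
  have h : LS n G x ≤ LS n G x' - n x * (G x' - G x) := by
    refine csSup_le ⟨_, basic_mem hx0⟩ fun v hv => ?_
    have h2 : v + n x * (G x' - G x) ≤ LS n G x' :=
      le_csSup (psums_bddAbove hn hG hx'mem) (mem_extend hx0 hxx hv)
    linarith
  linarith

lemma LS_le_add (hn : MonotoneOn n (Icc 0 1)) (hG : MonotoneOn G (Icc 0 1))
    {x x' : ℝ} (hx0 : 0 ≤ x) (hxx : x ≤ x') (hx1 : x' ≤ 1) :
    LS n G x' ≤ LS n G x + n x' * (G x' - G x) := by
  have hxmem : x ∈ Icc (0:ℝ) 1 := ⟨hx0, le_trans hxx hx1⟩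
  refine csSup_le ⟨_, basic_mem (le_trans hx0 hxx)⟩ fun v hv => ?_
  obtain ⟨v', hv', hle⟩ := key_clip hn hG hx0 hxx hx1 hv
  have h2 : v' ≤ LS n G x := le_csSup (psums_bddAbove hn hG hxmem) hv'
  linarith

lemma LS_zero (hn : MonotoneOn n (Icc 0 1)) (hG : MonotoneOn G (Icc 0 1)) :
    LS n G 0 = 0 := by
  have h1 := LS_le hn hG (x := 0) ⟨le_rfl, zero_le_one⟩
  have h2 := le_LS hn hG (x := 0) ⟨le_rfl, zero_le_one⟩
  simp at h1 h2
  linarith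

end AuxMAC
section Constr

variable {c : ℝ} {b1 b2 : ℝ → ℝ}

noncomputable def Gd (b1 : ℝ → ℝ) : ℝ → ℝ := fun x => (2:ℝ) ^ (2 * b1 x)

noncomputable def nd (c : ℝ) (b2 : ℝ → ℝ) : ℝ → ℝ :=
  fun x => (2:ℝ) ^ (2 * b2 (c * x + (1 - c)))

noncomputable def uu (c : ℝ) (b1 b2 : ℝ → ℝ) : ℝ → ℝ :=
  fun x => nd c b2 0 * (Gd b1 0 - 1) + LS (nd c b2) (Gd b1) x

noncomputable def ww (c : ℝ) (b1 b2 : ℝ → ℝ) : ℝ → ℝ := fun y =>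
  if y < 1 - c then (2:ℝ) ^ (2 * b2 y) - 1
  else (2:ℝ) ^ (2 * (b1 ((y - (1 - c)) / c) + b2 y)) - 1 - uu c b1 b2 ((y - (1 - c)) / c)

lemma rp_mono : Monotone (fun z : ℝ => (2:ℝ) ^ z) :=
  fun _ _ h => Real.rpow_le_rpow_of_exponent_le one_le_two h

lemma rp_add (a b : ℝ) : (2:ℝ) ^ (2 * (a + b)) = (2:ℝ) ^ (2 * a) * (2:ℝ) ^ (2 * b) := by
  rw [← Real.rpow_add two_pos]; ring_nf

lemma rp_one_le {a : ℝ} (ha : 0 ≤ a) : 1 ≤ (2:ℝ) ^ (2 * a) := by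
  have := rp_mono (by linarith : (0:ℝ) ≤ 2 * a)
  simpa using this

variable (hc0 : 0 < c) (hc1 : c ≤ 1)
  (hb1mono : MonotoneOn b1 (Set.Icc 0 1)) (hb2mono : MonotoneOn b2 (Set.Icc 0 1))
  (hb1nn : ∀ x ∈ Set.Icc (0:ℝ) 1, 0 ≤ b1 x)
  (hb2nn : ∀ x ∈ Set.Icc (0:ℝ) 1, 0 ≤ b2 x)

section
include hb1mono

lemma Gd_mono : MonotoneOn (Gd b1) (Icc 0 1) := fun x hx y hy hxy =>
  rp_mono (by have := hb1mono hx hy hxy; linarith)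

include hb1nn
lemma Gd_one_le {x : ℝ} (hx : x ∈ Icc (0:ℝ) 1) : 1 ≤ Gd b1 x := rp_one_le (hb1nn x hx)

end

include hc0 hc1

lemma aff_mem {x : ℝ} (hx : x ∈ Icc (0:ℝ) 1) : c * x + (1 - c) ∈ Icc (0:ℝ) 1 := by
  constructor
  · nlinarith [hx.1, hx.2]
  · nlinarith [hx.1, hx.2]

section
include hb2mono

lemma nd_mono : MonotoneOn (nd c b2) (Icc 0 1) := by
  intro x hx y hy hxy
  have h1 := aff_mem hc0 hc1 hx
  have h2 := aff_mem hc0 hc1 hy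
  have : b2 (c * x + (1 - c)) ≤ b2 (c * y + (1 - c)) :=
    hb2mono h1 h2 (by nlinarith)
  exact rp_mono (by linarith)

include hb2nn
lemma nd_one_le {x : ℝ} (hx : x ∈ Icc (0:ℝ) 1) : 1 ≤ nd c b2 x :=
  rp_one_le (hb2nn _ (aff_mem hc0 hc1 hx))

end

-- the basic sandwich facts for uu
section
include hb1mono hb2mono

lemma uu_incr_ge {x x' : ℝ} (hx : x ∈ Icc (0:ℝ) 1) (hx' : x' ∈ Icc (0:ℝ) 1) (hxx : x ≤ x') :
    nd c b2 x * (Gd b1 x' - Gd b1 x) ≤ uu c b1 b2 x' - uu c b1 b2 x := by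
  have := LS_add_le (nd_mono hc0 hc1 hb2mono) (Gd_mono hb1mono) hx.1 hxx hx'.2
  simp only [uu]; linarith

lemma uu_incr_le {x x' : ℝ} (hx : x ∈ Icc (0:ℝ) 1) (hx' : x' ∈ Icc (0:ℝ) 1) (hxx : x ≤ x') :
    uu c b1 b2 x' - uu c b1 b2 x ≤ nd c b2 x' * (Gd b1 x' - Gd b1 x) := by
  have := LS_le_add (nd_mono hc0 hc1 hb2mono) (Gd_mono hb1mono) hx.1 hxx hx'.2
  simp only [uu]; linarith

lemma uu_zero : uu c b1 b2 0 = nd c b2 0 * (Gd b1 0 - 1) := by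
  simp [uu, LS_zero (nd_mono hc0 hc1 hb2mono) (Gd_mono hb1mono)]

lemma uu_low {x : ℝ} (hx : x ∈ Icc (0:ℝ) 1) :
    nd c b2 0 * (Gd b1 x - 1) ≤ uu c b1 b2 x := by
  have := le_LS (nd_mono hc0 hc1 hb2mono) (Gd_mono hb1mono) hx
  simp only [uu]; nlinarith [this]

include hb1nn hb2nn

lemma uu_high {x : ℝ} (hx : x ∈ Icc (0:ℝ) 1) :
    uu c b1 b2 x ≤ nd c b2 x * (Gd b1 x - 1) := by
  have h1 := LS_le (nd_mono hc0 hc1 hb2mono) (Gd_mono hb1mono) hx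
  have h2 : nd c b2 0 ≤ nd c b2 x :=
    nd_mono hc0 hc1 hb2mono (left_mem_Icc.mpr zero_le_one) hx hx.1
  have h3 : 1 ≤ Gd b1 0 := Gd_one_le hb1mono hb1nn (left_mem_Icc.mpr zero_le_one)
  simp only [uu]; nlinarith [h1, h2, h3]

lemma uu_nonneg {x : ℝ} (hx : x ∈ Icc (0:ℝ) 1) : 0 ≤ uu c b1 b2 x := by
  have h1 := uu_low hc0 hc1 hb1mono hb2mono (x := x) hx
  have h2 : 1 ≤ Gd b1 x := Gd_one_le hb1mono hb1nn hx
  have h3 : 1 ≤ nd c b2 0 := nd_one_le hc0 hc1 hb2mono hb2nn (left_mem_Icc.mpr zero_le_one)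
  nlinarith

lemma uu_mono : MonotoneOn (uu c b1 b2) (Icc 0 1) := by
  intro x hx y hy hxy
  have h1 := uu_incr_ge hc0 hc1 hb1mono hb2mono hx hy hxy
  have h2 : 1 ≤ nd c b2 x := nd_one_le hc0 hc1 hb2mono hb2nn hx
  have h3 : Gd b1 x ≤ Gd b1 y := Gd_mono hb1mono hx hy hxy
  nlinarith

end

end Constr

section Constr2

variable {c : ℝ} {b1 b2 : ℝ → ℝ}
variable (hc0 : 0 < c) (hc1 : c ≤ 1)
  (hb1mono : MonotoneOn b1 (Set.Icc 0 1)) (hb2mono : MonotoneOn b2 (Set.Icc 0 1))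
  (hb1nn : ∀ x ∈ Set.Icc (0:ℝ) 1, 0 ≤ b1 x)
  (hb2nn : ∀ x ∈ Set.Icc (0:ℝ) 1, 0 ≤ b2 x)

include hc0

lemma c_mul_xm (y : ℝ) : c * ((y - (1 - c)) / c) + (1 - c) = y := by
  field_simp; ring

lemma nd_xm (y : ℝ) : nd c b2 ((y - (1 - c)) / c) = (2:ℝ) ^ (2 * b2 y) := by
  unfold nd; rw [c_mul_xm hc0]

lemma nd_zero : nd c b2 0 = (2:ℝ) ^ (2 * b2 (1 - c)) := by
  unfold nd; norm_num

lemma xm_mem {y : ℝ} (hy : y ∈ Icc (1 - c) 1) : (y - (1 - c)) / c ∈ Icc (0:ℝ) 1 := by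
  constructor
  · apply div_nonneg _ hc0.le; linarith [hy.1]
  · rw [div_le_one hc0]; linarith [hy.2]

include hc1

lemma onec_mem : (1 - c) ∈ Icc (0:ℝ) 1 := ⟨by linarith, by linarith⟩

lemma ww_eq_of_ge {y : ℝ} (hy : 1 - c ≤ y) :
    ww c b1 b2 y = (2:ℝ) ^ (2 * b2 y) * Gd b1 ((y - (1 - c)) / c) - 1
      - uu c b1 b2 ((y - (1 - c)) / c) := by
  rw [ww, if_neg (not_lt.mpr hy), rp_add, mul_comm ((2:ℝ) ^ (2 * b1 ((y - (1-c))/c)))]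
  rfl

include hb1mono hb2mono hb1nn hb2nn

lemma ww_ge {y : ℝ} (hy : y ∈ Icc (0:ℝ) 1) :
    (2:ℝ) ^ (2 * b2 y) - 1 ≤ ww c b1 b2 y := by
  by_cases h : y < 1 - c
  · rw [ww, if_pos h]
  · push_neg at h
    rw [ww_eq_of_ge hc0 hc1 h]
    have hz : (y - (1 - c)) / c ∈ Icc (0:ℝ) 1 := xm_mem hc0 ⟨h, hy.2⟩
    have h1 := uu_high hc0 hc1 hb1mono hb2mono hb1nn hb2nn hz
    rw [nd_xm hc0] at h1
    linarith

lemma ww_nonneg {y : ℝ} (hy : y ∈ Icc (0:ℝ) 1) : 0 ≤ ww c b1 b2 y := by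
  have h1 := ww_ge hc0 hc1 hb1mono hb2mono hb1nn hb2nn hy
  have h2 : 1 ≤ (2:ℝ) ^ (2 * b2 y) := rp_one_le (hb2nn y hy)
  linarith

lemma pair_ineq {x y : ℝ} (hx : x ∈ Icc (0:ℝ) 1) (hy : y ∈ Icc (0:ℝ) 1) :
    (2:ℝ) ^ (2 * (b1 x + b2 y)) - 1 ≤ uu c b1 b2 x + ww c b1 b2 y := by
  rw [rp_add]
  by_cases h : y < 1 - c
  · rw [ww, if_pos h]
    have h1 := uu_low hc0 hc1 hb1mono hb2mono hx
    have h2 : (2:ℝ) ^ (2 * b2 y) ≤ nd c b2 0 := by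
      rw [nd_zero hc0]
      exact rp_mono (by
        have := hb2mono hy (onec_mem hc0 hc1) h.le
        linarith)
    have h3 : 1 ≤ Gd b1 x := Gd_one_le hb1mono hb1nn hx
    have h4 : (0:ℝ) < (2:ℝ) ^ (2 * b2 y) := Real.rpow_pos_of_pos two_pos _
    have key : (2:ℝ) ^ (2 * b2 y) * (Gd b1 x - 1) ≤ uu c b1 b2 x := by
      calc (2:ℝ) ^ (2 * b2 y) * (Gd b1 x - 1) ≤ nd c b2 0 * (Gd b1 x - 1) := by nlinarith
        _ ≤ uu c b1 b2 x := h1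
    show (2:ℝ) ^ (2 * b1 x) * (2:ℝ) ^ (2 * b2 y) - 1 ≤ _
    unfold Gd at key h3
    nlinarith
  · push_neg at h
    rw [ww_eq_of_ge hc0 hc1 h]
    set z := (y - (1 - c)) / c with hzdef
    have hz : z ∈ Icc (0:ℝ) 1 := xm_mem hc0 ⟨h, hy.2⟩
    have hnz : nd c b2 z = (2:ℝ) ^ (2 * b2 y) := nd_xm hc0 y
    have key : nd c b2 z * (Gd b1 x - Gd b1 z) ≤ uu c b1 b2 x - uu c b1 b2 z := by
      rcases le_total z x with hh | hh
      · exact uu_incr_ge hc0 hc1 hb1mono hb2mono hz hx hh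
      · have := uu_incr_le hc0 hc1 hb1mono hb2mono hx hz hh
        nlinarith
    rw [hnz] at key
    show (2:ℝ) ^ (2 * b1 x) * (2:ℝ) ^ (2 * b2 y) - 1 ≤ _
    unfold Gd at key ⊢
    nlinarith

lemma uu_fact {x x' : ℝ} (hx : x ∈ Icc (0:ℝ) 1) (hx' : x' ∈ Icc (0:ℝ) 1)
    (h : b1 x = b1 x') : uu c b1 b2 x = uu c b1 b2 x' := by
  have hG : Gd b1 x = Gd b1 x' := by unfold Gd; rw [h]
  rcases le_total x x' with hh | hh
  · have h1 := uu_incr_ge hc0 hc1 hb1mono hb2mono hx hx' hh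
    have h2 := uu_incr_le hc0 hc1 hb1mono hb2mono hx hx' hh
    rw [hG] at h1 h2; simp at h1 h2; linarith
  · have h1 := uu_incr_ge hc0 hc1 hb1mono hb2mono hx' hx hh
    have h2 := uu_incr_le hc0 hc1 hb1mono hb2mono hx' hx hh
    rw [hG] at h1 h2; simp at h1 h2; linarith

-- exact value of uu when nd is constant up to z
lemma uu_exact_of_nd_const {z : ℝ} (hz : z ∈ Icc (0:ℝ) 1) (hnd : nd c b2 z = nd c b2 0) :
    uu c b1 b2 z = nd c b2 0 * (Gd b1 z - 1) := by
  have h0 : (0:ℝ) ∈ Icc (0:ℝ) 1 := left_mem_Icc.mpr zero_le_one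
  have h1 := uu_incr_ge hc0 hc1 hb1mono hb2mono h0 hz hz.1
  have h2 := uu_incr_le hc0 hc1 hb1mono hb2mono h0 hz hz.1
  have h3 := uu_zero hc0 hc1 hb1mono hb2mono (b1 := b1)
  rw [hnd] at h2
  nlinarith

lemma ww_onec : ww c b1 b2 (1 - c) = (2:ℝ) ^ (2 * b2 (1 - c)) - 1 := by
  rw [ww_eq_of_ge hc0 hc1 le_rfl]
  have : ((1 - c) - (1 - c)) / c = 0 := by simp
  rw [this, uu_zero hc0 hc1 hb1mono hb2mono, nd_zero hc0]
  ring

lemma ww_fact_aux {y y' : ℝ} (hy : y ∈ Icc (0:ℝ) 1) (hy' : y' ∈ Icc (0:ℝ) 1)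
    (hyy : y ≤ y') (h : b2 y = b2 y') : ww c b1 b2 y = ww c b1 b2 y' := by
  by_cases h1 : y' < 1 - c
  · rw [ww, ww, if_pos h1, if_pos (lt_of_le_of_lt hyy h1), h]
  · push_neg at h1
    set z' := (y' - (1 - c)) / c with hz'def
    have hz' : z' ∈ Icc (0:ℝ) 1 := xm_mem hc0 ⟨h1, hy'.2⟩
    have hnz' : nd c b2 z' = (2:ℝ) ^ (2 * b2 y') := nd_xm hc0 y'
    by_cases h2 : y < 1 - c
    · -- b2 (1-c) = b2 y
      have hsq : b2 (1 - c) = b2 y := le_antisymm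
        (h ▸ hb2mono (onec_mem hc0 hc1) hy' h1)
        (hb2mono hy (onec_mem hc0 hc1) h2.le)
      have hnd0 : nd c b2 z' = nd c b2 0 := by
        rw [hnz', nd_zero hc0, hsq, h]
      have hux := uu_exact_of_nd_const hc0 hc1 hb1mono hb2mono hb1nn hb2nn hz' hnd0
      rw [ww, if_pos h2, ww_eq_of_ge hc0 hc1 h1, ← hz'def, hux, nd_zero hc0, hsq, ← h]
      ring
    · push_neg at h2
      set z := (y - (1 - c)) / c with hzdef
      have hz : z ∈ Icc (0:ℝ) 1 := xm_mem hc0 ⟨h2, hy.2⟩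
      have hnz : nd c b2 z = (2:ℝ) ^ (2 * b2 y) := nd_xm hc0 y
      have hzz : z ≤ z' := div_le_div_of_nonneg_right (by linarith) hc0.le
      have ha := uu_incr_ge hc0 hc1 hb1mono hb2mono hz hz' hzz
      have hb := uu_incr_le hc0 hc1 hb1mono hb2mono hz hz' hzz
      rw [hnz] at ha
      rw [hnz'] at hb
      rw [← h] at hb
      rw [ww_eq_of_ge hc0 hc1 h2, ww_eq_of_ge hc0 hc1 h1, ← hzdef, ← hz'def, ← h]
      nlinarith

lemma ww_fact {y y' : ℝ} (hy : y ∈ Icc (0:ℝ) 1) (hy' : y' ∈ Icc (0:ℝ) 1)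
    (h : b2 y = b2 y') : ww c b1 b2 y = ww c b1 b2 y' := by
  rcases le_total y y' with hh | hh
  · exact ww_fact_aux hc0 hc1 hb1mono hb2mono hb1nn hb2nn hy hy' hh h
  · exact (ww_fact_aux hc0 hc1 hb1mono hb2mono hb1nn hb2nn hy' hy hh h.symm).symm

lemma ww_mono : MonotoneOn (ww c b1 b2) (Icc 0 1) := by
  intro y hy y' hy' hyy
  by_cases h1 : y' < 1 - c
  · rw [ww, ww, if_pos h1, if_pos (lt_of_le_of_lt hyy h1)]
    have := hb2mono hy hy' hyy
    have := rp_mono (by linarith : 2 * b2 y ≤ 2 * b2 y')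
    linarith
  · push_neg at h1
    by_cases h2 : y < 1 - c
    · rw [ww, if_pos h2]
      have hge := ww_ge hc0 hc1 hb1mono hb2mono hb1nn hb2nn hy'
      have := hb2mono hy hy' hyy
      have := rp_mono (by linarith : 2 * b2 y ≤ 2 * b2 y')
      linarith
    · push_neg at h2
      set z := (y - (1 - c)) / c with hzdef
      set z' := (y' - (1 - c)) / c with hz'def
      have hz : z ∈ Icc (0:ℝ) 1 := xm_mem hc0 ⟨h2, hy.2⟩
      have hz' : z' ∈ Icc (0:ℝ) 1 := xm_mem hc0 ⟨h1, hy'.2⟩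
      have hzz : z ≤ z' := div_le_div_of_nonneg_right (by linarith) hc0.le
      have hb := uu_incr_le hc0 hc1 hb1mono hb2mono hz hz' hzz
      rw [nd_xm hc0] at hb
      have hG1 : 1 ≤ Gd b1 z := Gd_one_le hb1mono hb1nn hz
      have hGz : Gd b1 z ≤ Gd b1 z' := Gd_mono hb1mono hz hz' hzz
      have hbb : (2:ℝ) ^ (2 * b2 y) ≤ (2:ℝ) ^ (2 * b2 y') := by
        have := hb2mono hy hy' hyy
        exact rp_mono (by linarith)
      rw [ww_eq_of_ge hc0 hc1 h2, ww_eq_of_ge hc0 hc1 h1, ← hzdef, ← hz'def]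
      nlinarith

end Constr2


theorem min_avg_sum_power_unit_delay
    (α1 α2 : ℝ) (hα2 : 0 < α2) (hα12 : α2 ≤ α1)
    (b1 b2 : ℝ → ℝ)
    (hb1mono : MonotoneOn b1 (Set.Icc 0 1)) (hb2mono : MonotoneOn b2 (Set.Icc 0 1))
    (hb1nn : ∀ x ∈ Set.Icc (0:ℝ) 1, 0 ≤ b1 x)
    (hb2nn : ∀ x ∈ Set.Icc (0:ℝ) 1, 0 ≤ b2 x) :
    IsLeast
      { s : ℝ | ∃ P1 P2 : ℝ → ℝ,
          (∀ x ∈ Set.Icc (0:ℝ) 1, 0 ≤ P1 (b1 x)) ∧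
          (∀ x ∈ Set.Icc (0:ℝ) 1, 0 ≤ P2 (b2 x)) ∧
          (∀ x ∈ Set.Icc (0:ℝ) 1, α1 * P1 (b1 x) ≥ (2:ℝ) ^ (2 * b1 x) - 1) ∧
          (∀ x ∈ Set.Icc (0:ℝ) 1, α2 * P2 (b2 x) ≥ (2:ℝ) ^ (2 * b2 x) - 1) ∧
          (∀ x ∈ Set.Icc (0:ℝ) 1, ∀ y ∈ Set.Icc (0:ℝ) 1,
            α1 * P1 (b1 x) + α2 * P2 (b2 y) ≥ (2:ℝ) ^ (2 * (b1 x + b2 y)) - 1) ∧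
          IntervalIntegrable (fun x => P1 (b1 x)) volume 0 1 ∧
          IntervalIntegrable (fun x => P2 (b2 x)) volume 0 1 ∧
          s = (∫ x in (0:ℝ)..1, P1 (b1 x)) + ∫ x in (0:ℝ)..1, P2 (b2 x) }
      ((∫ x in (0:ℝ)..(1 - α2 / α1), ((2:ℝ) ^ (2 * b2 x) - 1) / α2)
        + ∫ v in (0:ℝ)..(α2 / α1),
            ((2:ℝ) ^ (2 * (b2 (v + 1 - α2 / α1) + b1 (α1 * v / α2))) - 1) / α2) := by
  classical
  have hα1 : 0 < α1 := lt_of_lt_of_le hα2 hα12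
  set c := α2 / α1 with hcdef
  have hc0 : 0 < c := div_pos hα2 hα1
  have hc1 : c ≤ 1 := (div_le_one hα1).mpr hα12
  have honec : 0 ≤ 1 - c := by linarith
  -- canonical form of the second target integral
  set f : ℝ → ℝ := fun y =>
    ((2:ℝ) ^ (2 * (b1 ((y - (1 - c)) / c) + b2 y)) - 1) / α2 with hfdef
  have hB : (∫ v in (0:ℝ)..c,
      ((2:ℝ) ^ (2 * (b2 (v + 1 - c) + b1 (α1 * v / α2))) - 1) / α2)
      = ∫ y in (1 - c)..1, f y := by
    have harg : ∀ v : ℝ,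
        ((2:ℝ) ^ (2 * (b2 (v + 1 - c) + b1 (α1 * v / α2))) - 1) / α2 = f (v + (1 - c)) := by
      intro v
      rw [hfdef]
      have e1 : v + (1 - c) - (1 - c) = v := by ring
      have e2 : v / c = α1 * v / α2 := by
        rw [hcdef]; field_simp
      simp only [e1, e2]
      have e3 : v + 1 - c = v + (1 - c) := by ring
      rw [e3, add_comm (b1 (α1 * v / α2))]
    simp only [harg]
    rw [intervalIntegral.integral_comp_add_right f (1 - c)]
    norm_num
  -- affine substitution identity
  have hsub : ∀ g : ℝ → ℝ,
      (∫ y in (1 - c)..(1:ℝ), g ((y - (1 - c)) / c)) = c * ∫ x in (0:ℝ)..1, g x := by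
    intro g
    have h1 : ∀ y : ℝ, g ((y - (1 - c)) / c) = g (c⁻¹ * y + -(1 - c) / c) := by
      intro y; congr 1; field_simp; ring
    simp only [h1]
    rw [intervalIntegral.integral_comp_mul_add g (inv_ne_zero hc0.ne') (-(1 - c) / c)]
    have e1 : c⁻¹ * (1 - c) + -(1 - c) / c = 0 := by field_simp; ring
    have e2 : c⁻¹ * 1 + -(1 - c) / c = 1 := by field_simp; ring
    rw [e1, e2, inv_inv, smul_eq_mul]
  constructor
  · -- membership
    set P1 : ℝ → ℝ := fun r =>
      if h : ∃ x, x ∈ Set.Icc (0:ℝ) 1 ∧ b1 x = r then uu c b1 b2 h.choose / α1 else 0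
      with hP1def
    set P2 : ℝ → ℝ := fun r =>
      if h : ∃ y, y ∈ Set.Icc (0:ℝ) 1 ∧ b2 y = r then ww c b1 b2 h.choose / α2 else 0
      with hP2def
    have hP1 : ∀ x ∈ Set.Icc (0:ℝ) 1, P1 (b1 x) = uu c b1 b2 x / α1 := by
      intro x hx
      have hex : ∃ x', x' ∈ Set.Icc (0:ℝ) 1 ∧ b1 x' = b1 x := ⟨x, hx, rfl⟩
      simp only [hP1def]
      rw [dif_pos hex,
        uu_fact hc0 hc1 hb1mono hb2mono hb1nn hb2nn hex.choose_spec.1 hx hex.choose_spec.2]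
    have hP2 : ∀ y ∈ Set.Icc (0:ℝ) 1, P2 (b2 y) = ww c b1 b2 y / α2 := by
      intro y hy
      have hex : ∃ y', y' ∈ Set.Icc (0:ℝ) 1 ∧ b2 y' = b2 y := ⟨y, hy, rfl⟩
      simp only [hP2def]
      rw [dif_pos hex,
        ww_fact hc0 hc1 hb1mono hb2mono hb1nn hb2nn hex.choose_spec.1 hy hex.choose_spec.2]
    have hGdx : ∀ x : ℝ, Gd b1 x = (2:ℝ) ^ (2 * b1 x) := fun _ => rfl
    refine ⟨P1, P2, ?_, ?_, ?_, ?_, ?_, ?_, ?_, ?_⟩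
    · intro x hx
      rw [hP1 x hx]
      exact div_nonneg (uu_nonneg hc0 hc1 hb1mono hb2mono hb1nn hb2nn hx) hα1.le
    · intro y hy
      rw [hP2 y hy]
      exact div_nonneg (ww_nonneg hc0 hc1 hb1mono hb2mono hb1nn hb2nn hy) hα2.le
    · intro x hx
      rw [hP1 x hx]
      have hcan : α1 * (uu c b1 b2 x / α1) = uu c b1 b2 x := by field_simp
      rw [hcan, ge_iff_le]
      have hlow := uu_low hc0 hc1 hb1mono hb2mono hx
      have hn0 : 1 ≤ nd c b2 0 :=
        nd_one_le hc0 hc1 hb2mono hb2nn (Set.left_mem_Icc.mpr zero_le_one)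
      have hG1 : 1 ≤ Gd b1 x := Gd_one_le hb1mono hb1nn hx
      rw [← hGdx x]
      nlinarith
    · intro y hy
      rw [hP2 y hy]
      have hcan : α2 * (ww c b1 b2 y / α2) = ww c b1 b2 y := by field_simp
      rw [hcan, ge_iff_le]
      exact ww_ge hc0 hc1 hb1mono hb2mono hb1nn hb2nn hy
    · intro x hx y hy
      rw [hP1 x hx, hP2 y hy]
      have hcan1 : α1 * (uu c b1 b2 x / α1) = uu c b1 b2 x := by field_simp
      have hcan2 : α2 * (ww c b1 b2 y / α2) = ww c b1 b2 y := by field_simp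
      rw [hcan1, hcan2, ge_iff_le]
      exact pair_ineq hc0 hc1 hb1mono hb2mono hb1nn hb2nn hx hy
    · apply MonotoneOn.intervalIntegrable
      rw [Set.uIcc_of_le zero_le_one]
      intro a ha b hb hab
      show P1 (b1 a) ≤ P1 (b1 b)
      rw [hP1 a ha, hP1 b hb]
      exact div_le_div_of_nonneg_right
        (uu_mono hc0 hc1 hb1mono hb2mono hb1nn hb2nn ha hb hab) hα1.le
    · apply MonotoneOn.intervalIntegrable
      rw [Set.uIcc_of_le zero_le_one]
      intro a ha b hb hab
      show P2 (b2 a) ≤ P2 (b2 b)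
      rw [hP2 a ha, hP2 b hb]
      exact div_le_div_of_nonneg_right
        (ww_mono hc0 hc1 hb1mono hb2mono hb1nn hb2nn ha hb hab) hα2.le
    · -- the value
      have hwint : ∀ a b : ℝ, a ∈ Set.Icc (0:ℝ) 1 → b ∈ Set.Icc (0:ℝ) 1 → a ≤ b →
          IntervalIntegrable (fun y => ww c b1 b2 y / α2) volume a b := by
        intro a b ha hb hab
        apply MonotoneOn.intervalIntegrable
        rw [Set.uIcc_of_le hab]
        intro p hp q hq hpq
        have hp1 : p ∈ Set.Icc (0:ℝ) 1 := ⟨le_trans ha.1 hp.1, le_trans hp.2 hb.2⟩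
        have hq1 : q ∈ Set.Icc (0:ℝ) 1 := ⟨le_trans ha.1 hq.1, le_trans hq.2 hb.2⟩
        exact div_le_div_of_nonneg_right
          (ww_mono hc0 hc1 hb1mono hb2mono hb1nn hb2nn hp1 hq1 hpq) hα2.le
      have hI1 : (∫ x in (0:ℝ)..1, P1 (b1 x)) = (∫ x in (0:ℝ)..1, uu c b1 b2 x) / α1 := by
        rw [intervalIntegral.integral_congr (g := fun x => uu c b1 b2 x / α1)
          (by rw [Set.uIcc_of_le zero_le_one]; exact fun x hx => hP1 x hx),
          intervalIntegral.integral_div]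
      have hI2 : (∫ y in (0:ℝ)..1, P2 (b2 y)) = ∫ y in (0:ℝ)..1, ww c b1 b2 y / α2 :=
        intervalIntegral.integral_congr
          (by rw [Set.uIcc_of_le zero_le_one]; exact fun y hy => hP2 y hy)
      have h1mem : (1:ℝ) ∈ Set.Icc (0:ℝ) 1 := Set.right_mem_Icc.mpr zero_le_one
      have h0mem : (0:ℝ) ∈ Set.Icc (0:ℝ) 1 := Set.left_mem_Icc.mpr zero_le_one
      have honecmem : (1 - c) ∈ Set.Icc (0:ℝ) 1 := ⟨honec, by linarith⟩
      have hsplit : (∫ y in (0:ℝ)..1, ww c b1 b2 y / α2)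
          = (∫ y in (0:ℝ)..(1 - c), ww c b1 b2 y / α2)
            + ∫ y in (1 - c)..1, ww c b1 b2 y / α2 :=
        (intervalIntegral.integral_add_adjacent_intervals
          (hwint 0 (1 - c) h0mem honecmem honec)
          (hwint (1 - c) 1 honecmem h1mem (by linarith))).symm
      have hA : (∫ y in (0:ℝ)..(1 - c), ww c b1 b2 y / α2)
          = ∫ y in (0:ℝ)..(1 - c), ((2:ℝ) ^ (2 * b2 y) - 1) / α2 := by
        apply intervalIntegral.integral_congr
        rw [Set.uIcc_of_le honec]
        intro y hy
        show ww c b1 b2 y / α2 = ((2:ℝ) ^ (2 * b2 y) - 1) / α2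
        by_cases h : y < 1 - c
        · simp only [ww, if_pos h]
        · have he : y = 1 - c := le_antisymm hy.2 (not_lt.mp h)
          rw [he, ww_onec hc0 hc1 hb1mono hb2mono hb1nn hb2nn]
      have hI2b : (∫ y in (1 - c)..1, ww c b1 b2 y / α2)
          = ∫ y in (1 - c)..1, (f y - uu c b1 b2 ((y - (1 - c)) / c) / α2) := by
        apply intervalIntegral.integral_congr
        rw [Set.uIcc_of_le (by linarith : (1:ℝ) - c ≤ 1)]
        intro y hy
        show ww c b1 b2 y / α2 = f y - uu c b1 b2 ((y - (1 - c)) / c) / α2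
        simp only [ww, if_neg (not_lt.mpr hy.1), hfdef]
        ring
      have hfint : IntervalIntegrable f volume (1 - c) 1 := by
        apply MonotoneOn.intervalIntegrable
        rw [Set.uIcc_of_le (by linarith : (1:ℝ) - c ≤ 1)]
        intro a ha b hb hab
        have hza : (a - (1 - c)) / c ∈ Set.Icc (0:ℝ) 1 := xm_mem hc0 ha
        have hzb : (b - (1 - c)) / c ∈ Set.Icc (0:ℝ) 1 := xm_mem hc0 hb
        have hzz : (a - (1 - c)) / c ≤ (b - (1 - c)) / c :=
          div_le_div_of_nonneg_right (by linarith) hc0.le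
        have hb1le : b1 ((a - (1 - c)) / c) ≤ b1 ((b - (1 - c)) / c) := hb1mono hza hzb hzz
        have hb2le : b2 a ≤ b2 b := hb2mono
          ⟨le_trans honec ha.1, ha.2⟩ ⟨le_trans honec hb.1, hb.2⟩ hab
        rw [hfdef]
        have := rp_mono (by linarith :
          2 * (b1 ((a - (1 - c)) / c) + b2 a) ≤ 2 * (b1 ((b - (1 - c)) / c) + b2 b))
        apply div_le_div_of_nonneg_right _ hα2.le
        linarith
      have huxmint : IntervalIntegrable
          (fun y => uu c b1 b2 ((y - (1 - c)) / c) / α2) volume (1 - c) 1 := by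
        apply MonotoneOn.intervalIntegrable
        rw [Set.uIcc_of_le (by linarith : (1:ℝ) - c ≤ 1)]
        intro a ha b hb hab
        have hza : (a - (1 - c)) / c ∈ Set.Icc (0:ℝ) 1 := xm_mem hc0 ha
        have hzb : (b - (1 - c)) / c ∈ Set.Icc (0:ℝ) 1 := xm_mem hc0 hb
        have hzz : (a - (1 - c)) / c ≤ (b - (1 - c)) / c :=
          div_le_div_of_nonneg_right (by linarith) hc0.le
        exact div_le_div_of_nonneg_right
          (uu_mono hc0 hc1 hb1mono hb2mono hb1nn hb2nn hza hzb hzz) hα2.le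
      have hIsub : (∫ y in (1 - c)..1, (f y - uu c b1 b2 ((y - (1 - c)) / c) / α2))
          = (∫ y in (1 - c)..1, f y)
            - ∫ y in (1 - c)..1, uu c b1 b2 ((y - (1 - c)) / c) / α2 :=
        intervalIntegral.integral_sub hfint huxmint
      have huxm : (∫ y in (1 - c)..1, uu c b1 b2 ((y - (1 - c)) / c) / α2)
          = (∫ x in (0:ℝ)..1, uu c b1 b2 x) / α1 := by
        rw [hsub (fun x => uu c b1 b2 x / α2), intervalIntegral.integral_div, hcdef]
        field_simp
      rw [hI1, hI2, hsplit, hA, hI2b, hIsub, huxm, hB]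
      ring
  · -- lower bound
    rintro s ⟨P1, P2, h1, h2, h3, h4, h5, h6, h7, rfl⟩
    rw [hB]
    have hsubIcc : Set.Icc (1 - c) 1 ⊆ Set.Icc (0:ℝ) 1 := Set.Icc_subset_Icc honec le_rfl
    have huIcc1 : Set.uIcc (0:ℝ) (1 - c) ⊆ Set.uIcc (0:ℝ) 1 := by
      rw [Set.uIcc_of_le honec, Set.uIcc_of_le zero_le_one]
      exact Set.Icc_subset_Icc le_rfl (by linarith)
    have huIcc2 : Set.uIcc (1 - c) 1 ⊆ Set.uIcc (0:ℝ) 1 := by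
      rw [Set.uIcc_of_le (by linarith : (1:ℝ) - c ≤ 1), Set.uIcc_of_le zero_le_one]
      exact Set.Icc_subset_Icc honec le_rfl
    -- integrability of the composed P1 piece
    have hcomp : IntervalIntegrable (fun y => P1 (b1 ((y - (1 - c)) / c))) volume (1 - c) 1 := by
      have ha := (h6.comp_mul_right (c := c⁻¹)).comp_add_right (-(1 - c))
      have hfe : (fun y : ℝ => P1 (b1 ((y - (1 - c)) / c)))
          = fun x : ℝ => P1 (b1 ((x + -(1 - c)) * c⁻¹)) := by
        funext y
        have : (y - (1 - c)) / c = (y + -(1 - c)) * c⁻¹ := by ring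
        rw [this]
      rw [hfe]
      have e1 : (0:ℝ) / c⁻¹ - -(1 - c) = 1 - c := by simp
      have e2 : (1:ℝ) / c⁻¹ - -(1 - c) = 1 := by
        rw [one_div, inv_inv]; ring
      rwa [e1, e2] at ha
    -- split ∫ P2
    have hsplit : (∫ y in (0:ℝ)..1, P2 (b2 y))
        = (∫ y in (0:ℝ)..(1 - c), P2 (b2 y)) + ∫ y in (1 - c)..1, P2 (b2 y) :=
      (intervalIntegral.integral_add_adjacent_intervals
        (h7.mono_set huIcc1) (h7.mono_set huIcc2)).symm
    -- express ∫ P1 over the shifted interval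
    have hP1s : (∫ x in (0:ℝ)..1, P1 (b1 x))
        = ∫ y in (1 - c)..1, c⁻¹ * P1 (b1 ((y - (1 - c)) / c)) := by
      rw [intervalIntegral.integral_const_mul, hsub (fun x => P1 (b1 x))]
      field_simp
    rw [hP1s, hsplit]
    have hmono1 : (∫ y in (0:ℝ)..(1 - c), ((2:ℝ) ^ (2 * b2 y) - 1) / α2)
        ≤ ∫ y in (0:ℝ)..(1 - c), P2 (b2 y) := by
      apply intervalIntegral.integral_mono_on honec _ (h7.mono_set huIcc1)
      · intro y hy
        have hy1 : y ∈ Set.Icc (0:ℝ) 1 := ⟨hy.1, le_trans hy.2 (by linarith)⟩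
        have := h4 y hy1
        rw [div_le_iff₀ hα2]
        linarith [this]
      · apply MonotoneOn.intervalIntegrable
        rw [Set.uIcc_of_le honec]
        intro a ha b hb hab
        have h1 : b2 a ≤ b2 b := hb2mono ⟨ha.1, le_trans ha.2 (by linarith)⟩
          ⟨hb.1, le_trans hb.2 (by linarith)⟩ hab
        have := rp_mono (by linarith : 2 * b2 a ≤ 2 * b2 b)
        apply div_le_div_of_nonneg_right _ hα2.le
        linarith
    have hmono2 : (∫ y in (1 - c)..1, f y)
        ≤ ∫ y in (1 - c)..1, (c⁻¹ * P1 (b1 ((y - (1 - c)) / c)) + P2 (b2 y)) := by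
      apply intervalIntegral.integral_mono_on (by linarith : (1:ℝ) - c ≤ 1)
      · -- f integrable
        apply MonotoneOn.intervalIntegrable
        rw [Set.uIcc_of_le (by linarith : (1:ℝ) - c ≤ 1)]
        intro a ha b hb hab
        have hza : (a - (1 - c)) / c ∈ Set.Icc (0:ℝ) 1 := xm_mem hc0 ha
        have hzb : (b - (1 - c)) / c ∈ Set.Icc (0:ℝ) 1 := xm_mem hc0 hb
        have hzz : (a - (1 - c)) / c ≤ (b - (1 - c)) / c :=
          div_le_div_of_nonneg_right (by linarith) hc0.le
        have hb1le : b1 ((a - (1 - c)) / c) ≤ b1 ((b - (1 - c)) / c) := hb1mono hza hzb hzz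
        have hb2le : b2 a ≤ b2 b := hb2mono (hsubIcc ha) (hsubIcc hb) hab
        rw [hfdef]
        have := rp_mono (by linarith :
          2 * (b1 ((a - (1 - c)) / c) + b2 a) ≤ 2 * (b1 ((b - (1 - c)) / c) + b2 b))
        apply div_le_div_of_nonneg_right _ hα2.le
        linarith
      · exact (hcomp.const_mul c⁻¹).add (h7.mono_set huIcc2)
      · intro y hy
        have hy1 : y ∈ Set.Icc (0:ℝ) 1 := hsubIcc hy
        have hz : (y - (1 - c)) / c ∈ Set.Icc (0:ℝ) 1 := xm_mem hc0 hy
        have h5' := h5 _ hz y hy1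
        rw [hfdef]
        rw [div_le_iff₀ hα2]
        have heq : (c⁻¹ * P1 (b1 ((y - (1 - c)) / c)) + P2 (b2 y)) * α2
            = α1 * P1 (b1 ((y - (1 - c)) / c)) + α2 * P2 (b2 y) := by
          rw [hcdef]; field_simp
        rw [heq]
        linarith [h5']
    have hadd : (∫ y in (1 - c)..1, (c⁻¹ * P1 (b1 ((y - (1 - c)) / c)) + P2 (b2 y)))
        = (∫ y in (1 - c)..1, c⁻¹ * P1 (b1 ((y - (1 - c)) / c)))
          + ∫ y in (1 - c)..1, P2 (b2 y) :=
      intervalIntegral.integral_add (hcomp.const_mul c⁻¹) (h7.mono_set huIcc2)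
    linarith [hmono1, hmono2, hadd.symm.le, hadd.le]
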